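/- Let Γ = (G, σ) be a balanced signed graph on n vertices and let F_k(Γ) be its k-token signed graph for some k with 1 ≤ k ≤ n−1. Then the Laplacian spectrum of Γ is contained in the Laplacian spectrum of F_k(Γ), counting multiplicities: for every real number λ, the multiplicity of λ as a root of the characteristic polynomial of the Laplacian matrix of F_k(Γ) is at least its multiplicity as a root of the characteristic polynomial of the Laplacian matrix of Γ. -/

import Mathlib

open scoped Classical

/-- A signed graph: a simple graph together with a signature assigning a sign `±1`
(an element of `ℤˣ`) to each pair of vertices (only the values on edges are relevant). -/
structure SignedGraph (V : Type*) where
  G : SimpleGraph V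
  sign : V → V → ℤˣ
  sign_symm : ∀ u v, sign u v = sign v u

namespace SignedGraph

variable {V W : Type*}

/-- The sign function, as a function on unordered pairs. -/
def esign (Γ : SignedGraph V) : Sym2 V → ℤˣ :=
  Sym2.lift ⟨Γ.sign, Γ.sign_symm⟩

/-- The sign of a walk: the product of the signs of its edges. -/
def walkSign (Γ : SignedGraph V) {u v : V} (p : Γ.G.Walk u v) : ℤˣ :=
  (p.edges.map Γ.esign).prod

/-- A signed graph is balanced if every cycle is positive. -/
def Balanced (Γ : SignedGraph V) : Prop :=
  ∀ ⦃u : V⦄ (p : Γ.G.Walk u u), p.IsCycle → Γ.walkSign p = 1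

/-- Switching at a vertex subset `U`: reverse the sign of every edge with exactly one
endpoint in `U`. -/
noncomputable def switch (Γ : SignedGraph V) (U : Set V) : SignedGraph V where
  G := Γ.G
  sign u v := (if u ∈ U then (-1 : ℤˣ) else 1) * (if v ∈ U then (-1 : ℤˣ) else 1) * Γ.sign u v
  sign_symm u v := by
    try dsimp only
    rw [Γ.sign_symm u v, mul_comm (if u ∈ U then (-1 : ℤˣ) else 1) (if v ∈ U then (-1 : ℤˣ) else 1)]

/-- Two signed graphs on the same vertex set are "the same signed graph" when they have the
same underlying graph and the same signature on every edge. -/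
def SEq (Γ Γ' : SignedGraph V) : Prop :=
  Γ.G = Γ'.G ∧ ∀ u v, Γ.G.Adj u v → Γ.sign u v = Γ'.sign u v

/-- Switching equivalence of two signed graphs on the same vertex set. -/
def SwitchEquiv (Γ Γ' : SignedGraph V) : Prop :=
  ∃ U : Set V, (Γ.switch U).SEq Γ'

/-- A sign-preserving isomorphism of signed graphs. -/
structure Iso (Γ : SignedGraph V) (Γ' : SignedGraph W) where
  toEquiv : V ≃ W
  adj_iff : ∀ u v, Γ.G.Adj u v ↔ Γ'.G.Adj (toEquiv u) (toEquiv v)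
  sign_eq : ∀ u v, Γ.G.Adj u v → Γ.sign u v = Γ'.sign (toEquiv u) (toEquiv v)

/-- Switching isomorphism: `Γ'` is isomorphic to a switching of `Γ`. -/
def SwitchIso (Γ : SignedGraph V) (Γ' : SignedGraph W) : Prop :=
  ∃ U : Set V, Nonempty ((Γ.switch U).Iso Γ')

/-- The negation of a signed graph: all edge signs reversed. -/
def neg (Γ : SignedGraph V) : SignedGraph V where
  G := Γ.G
  sign u v := -Γ.sign u v
  sign_symm u v := by (try dsimp only); rw [Γ.sign_symm]

variable [DecidableEq V]

/-- The underlying graph of the `k`-token graph: vertices are the `k`-subsets of `V`,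
with `A ~ B` when `A Δ B = {a, b}`, `a ∈ A`, `b ∈ B` and `a ~ b` in `G`. -/
def tokenAdj (G : SimpleGraph V) (k : ℕ) : SimpleGraph {A : Finset V // A.card = k} where
  Adj A B := ∃ a b, a ∈ A.1 ∧ b ∈ B.1 ∧ G.Adj a b ∧ symmDiff A.1 B.1 = {a, b}
  symm := by
    constructor
    rintro A B ⟨a, b, ha, hb, hab, hs⟩
    exact ⟨b, a, hb, ha, hab.symm, by rw [symmDiff_comm, hs, Finset.pair_comm]⟩
  loopless := by
    constructor
    rintro A ⟨a, b, ha, hb, hab, hs⟩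
    rw [symmDiff_self] at hs
    have h : a ∈ ({a, b} : Finset V) := Finset.mem_insert_self a {b}
    rw [← hs] at h
    simp at h

/-- The `k`-token signed graph: the edge obtained by moving a token along `ab`
carries the sign of `ab`. -/
def token (Γ : SignedGraph V) (k : ℕ) : SignedGraph {A : Finset V // A.card = k} where
  G := tokenAdj Γ.G k
  sign A B := ∏ a ∈ A.1 \ B.1, ∏ b ∈ B.1 \ A.1, Γ.sign a b
  sign_symm A B := by
    try dsimp only
    rw [Finset.prod_comm]
    exact Finset.prod_congr rfl fun b _ => Finset.prod_congr rfl fun a _ => Γ.sign_symm a b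

/-- The signed adjacency matrix (over `ℝ`). -/
noncomputable def adjMatrix (Γ : SignedGraph V) [Fintype V] : Matrix V V ℝ :=
  Matrix.of fun u v => if Γ.G.Adj u v then ((Γ.sign u v : ℤ) : ℝ) else 0

/-- The signed Laplacian matrix `L = D - A` (over `ℝ`). -/
noncomputable def lapMatrix (Γ : SignedGraph V) [Fintype V] : Matrix V V ℝ :=
  Matrix.diagonal (fun v => (Γ.G.degree v : ℝ)) - Γ.adjMatrix

/-- The quantity `ℓ_m(Γ)`. -/
noncomputable def ellm (Γ : SignedGraph V) [Fintype V] (m : ℕ) : ℝ :=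
  (∑ r ∈ Finset.range (m + 1),
      ((Γ.G.adjMatrix ℝ ^ r).trace - (Γ.adjMatrix ^ r).trace)) /
  (∑ r ∈ Finset.range (m + 1),
      ((Γ.G.adjMatrix ℝ ^ r).trace + |(Γ.adjMatrix ^ r).trace|))

/-- The unbalance level `ℓ(Γ) = max {ℓ_{n-1}(Γ), ℓ_n(Γ)}`. -/
noncomputable def unbalanceLevel (Γ : SignedGraph V) [Fintype V] : ℝ :=
  max (Γ.ellm (Fintype.card V - 1)) (Γ.ellm (Fintype.card V))

/-- The frustration index: the minimum number of negative edges whose deletion yields a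
balanced signed graph. -/
noncomputable def frustrationIndex (Γ : SignedGraph V) : ℕ :=
  sInf {m : ℕ | ∃ F : Finset (Sym2 V), F.card = m ∧ ↑F ⊆ Γ.G.edgeSet ∧
    (∀ e ∈ F, Γ.esign e = -1) ∧
    Balanced ⟨Γ.G.deleteEdges ↑F, Γ.sign, Γ.sign_symm⟩}

/-- The signed complement of a balanced signed graph, with respect to a switching function
`s` witnessing balance (`A_σ = S A S`): the signed graph on the complement graph with
adjacency matrix `S Ā S`, i.e. with sign `s u * s v` on each complement edge. -/
def scompl (Γ : SignedGraph V) (s : V → ℤˣ) : SignedGraph V where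
  G := Γ.Gᶜ
  sign u v := s u * s v
  sign_symm u v := mul_comm _ _

/-- The real diagonal `±1` matrix associated with `s : V → ℤˣ`. -/
noncomputable def diagS [Fintype V] (s : V → ℤˣ) : Matrix V V ℝ :=
  Matrix.diagonal fun v => ((s v : ℤ) : ℝ)

end SignedGraph

/-- The all-positive signed complete graph on `V`. -/
def allPos (V : Type*) : SignedGraph V := ⟨⊤, fun _ _ => 1, fun _ _ => rfl⟩

/-- The `(n; 1, k)`-binomial matrix. -/
noncomputable def binomB (V : Type*) [Fintype V] [DecidableEq V] (k : ℕ) :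
    Matrix {A : Finset V // A.card = k} V ℝ :=
  Matrix.of fun A v => if v ∈ A.1 then 1 else 0

/-- The `(n; k₁, k₂)`-binomial matrix. -/
noncomputable def binomB2 (V : Type*) [Fintype V] [DecidableEq V] (k₁ k₂ : ℕ) :
    Matrix {A : Finset V // A.card = k₂} {A : Finset V // A.card = k₁} ℝ :=
  Matrix.of fun A X => if X.1 ⊆ A.1 then 1 else 0


namespace SignedGraph

section WalkLemmas

variable {V : Type*}

variable (Γ : SignedGraph V)

lemma esign_mk (u v : V) : Γ.esign s(u, v) = Γ.sign u v := rfl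

@[simp] lemma walkSign_nil {u : V} :
    Γ.walkSign (SimpleGraph.Walk.nil : Γ.G.Walk u u) = 1 := rfl

lemma walkSign_cons {u v w : V} (h : Γ.G.Adj u v) (p : Γ.G.Walk v w) :
    Γ.walkSign (SimpleGraph.Walk.cons h p) = Γ.sign u v * Γ.walkSign p := by
  simp [walkSign, SimpleGraph.Walk.edges_cons, esign_mk]

lemma walkSign_append {u v w : V} (p : Γ.G.Walk u v) (q : Γ.G.Walk v w) :
    Γ.walkSign (p.append q) = Γ.walkSign p * Γ.walkSign q := by
  simp [walkSign, SimpleGraph.Walk.edges_append]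

lemma walkSign_reverse {u v : V} (p : Γ.G.Walk u v) :
    Γ.walkSign p.reverse = Γ.walkSign p := by
  simp [walkSign, SimpleGraph.Walk.edges_reverse, List.map_reverse, List.prod_reverse]

lemma walkSign_copy {u v u' v' : V} (p : Γ.G.Walk u v) (hu : u = u') (hv : v = v') :
    Γ.walkSign (p.copy hu hv) = Γ.walkSign p := by
  subst hu; subst hv; rfl

/-- In a path of length at least 2, the edge joining the two endpoints does not occur. -/
lemma edge_end_start_not_mem {a b : V} (p : Γ.G.Walk a b) (hn : p.support.Nodup)
    (hl : 2 ≤ p.length) : s(b, a) ∉ p.edges := by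
  cases p with
  | nil => simp at hl
  | @cons _ c _ h r =>
    rw [SimpleGraph.Walk.support_cons, List.nodup_cons] at hn
    intro he
    rw [SimpleGraph.Walk.edges_cons, List.mem_cons] at he
    have hab : a ≠ b := fun hab => hn.1 (hab ▸ r.end_mem_support)
    rcases he with he | he
    · rw [Sym2.eq_iff] at he
      rcases he with ⟨h1, _⟩ | ⟨h1, _⟩
      · exact hab h1.symm
      · subst h1
        have : r = SimpleGraph.Walk.nil :=
          (SimpleGraph.Walk.isPath_iff_eq_nil (p := r)).mp
            (SimpleGraph.Walk.IsPath.mk' hn.2)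
        subst this
        simp at hl
    · exact hn.1 (r.snd_mem_support_of_mem_edges he)

lemma cons_nil_exists {u w : V} (r : Γ.G.Walk w u) (hw : w ∈ r.support.tail) :
    ∃ (x : V) (h' : Γ.G.Adj w x) (r3 : Γ.G.Walk x u), r = SimpleGraph.Walk.cons h' r3 := by
  cases r with
  | nil => simp at hw
  | cons h' r3 => exact ⟨_, h', r3, rfl⟩

lemma walkSign_closed_aux (hbal : Γ.Balanced) :
    ∀ (n : ℕ) {u : V} (p : Γ.G.Walk u u), p.length ≤ n → Γ.walkSign p = 1 := by
  intro n
  induction n with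
  | zero =>
    intro u p hp
    cases p with
    | nil => simp
    | cons h q => simp at hp
  | succ n ih =>
    intro u p hp
    cases p with
    | nil => simp
    | @cons _ v _ h q =>
      have hq : q.length ≤ n := by
        simpa [SimpleGraph.Walk.length_cons] using hp
      by_cases hnd : q.support.Nodup
      · by_cases hq2 : 2 ≤ q.length
        · apply hbal
          rw [SimpleGraph.Walk.cons_isCycle_iff]
          exact ⟨SimpleGraph.Walk.IsPath.mk' hnd, Γ.edge_end_start_not_mem q hnd hq2⟩
        · cases q with
          | nil => exact (Γ.G.loopless.irrefl u h).elim
          | @cons _ x _ h' q' =>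
            cases q' with
            | nil =>
              rw [walkSign_cons, walkSign_cons, walkSign_nil, mul_one,
                ← Γ.sign_symm u v, Int.units_mul_self]
            | cons h'' q'' =>
              exfalso
              simp [SimpleGraph.Walk.length_cons] at hq2
      · obtain ⟨w, hwdup⟩ := List.exists_duplicate_iff_not_nodup.mpr hnd
        have hcount : 2 ≤ q.support.count w := List.duplicate_iff_two_le_count.mp hwdup
        have hw1 : w ∈ q.support := List.count_pos_iff.mp (by omega)
        have hspec := q.take_spec hw1
        set r1 := q.takeUntil w hw1 with hr1def
        set r2 := q.dropUntil w hw1 with hr2def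
        have hc1 : r1.support.count w = 1 := q.count_support_takeUntil_eq_one hw1
        have hwtail : w ∈ r2.support.tail := by
          have hqs : q.support = r1.support ++ r2.support.tail := by
            rw [← hspec, SimpleGraph.Walk.support_append]
          rw [hqs, List.count_append, hc1] at hcount
          exact List.count_pos_iff.mp (by omega)
        obtain ⟨x, h', r3, hr2⟩ := Γ.cons_nil_exists r2 hwtail
        have hw3 : w ∈ r3.support := by
          rw [hr2] at hwtail
          simpa using hwtail
        have hspec3 := r3.take_spec hw3
        set t := r3.takeUntil w hw3 with htdef
        set r4 := r3.dropUntil w hw3 with hr4def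
        have hlen : r1.length + r2.length = q.length := by
          rw [← hspec, SimpleGraph.Walk.length_append]
        have hlen3 : t.length + r4.length = r3.length := by
          rw [← hspec3, SimpleGraph.Walk.length_append]
        have hlen2 : r2.length = r3.length + 1 := by
          rw [hr2]; simp [SimpleGraph.Walk.length_cons]
        have hd : Γ.walkSign (SimpleGraph.Walk.cons h' t) = 1 := by
          apply ih
          simp only [SimpleGraph.Walk.length_cons]
          omega
        have hp' : Γ.walkSign (SimpleGraph.Walk.cons h (r1.append r4)) = 1 := by
          apply ih
          simp only [SimpleGraph.Walk.length_cons, SimpleGraph.Walk.length_append]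
          omega
        rw [walkSign_cons, walkSign_append] at hp'
        rw [walkSign_cons] at hd
        rw [walkSign_cons, ← hspec, walkSign_append, hr2, walkSign_cons, ← hspec3,
          walkSign_append]
        have hkey : (Γ.sign u v * (Γ.walkSign r1 * Γ.walkSign r4)) *
            (Γ.sign w x * Γ.walkSign t) = 1 := by rw [hp', hd, one_mul]
        rw [← hkey]
        simp only [mul_assoc, mul_comm, mul_left_comm]

lemma walkSign_closed (hbal : Γ.Balanced) {u : V} (p : Γ.G.Walk u u) :
    Γ.walkSign p = 1 :=
  Γ.walkSign_closed_aux hbal p.length p le_rfl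

lemma sign_eq_of_walks (hbal : Γ.Balanced) {a u v : V} (p : Γ.G.Walk a u)
    (q : Γ.G.Walk a v) (h : Γ.G.Adj u v) :
    Γ.sign u v = Γ.walkSign p * Γ.walkSign q := by
  have h1 : Γ.walkSign (p.append (SimpleGraph.Walk.cons h q.reverse)) = 1 :=
    Γ.walkSign_closed hbal _
  rw [walkSign_append, walkSign_cons, walkSign_reverse] at h1
  calc Γ.sign u v
      = (Γ.walkSign p * Γ.walkSign p) * ((Γ.walkSign q * Γ.walkSign q) * Γ.sign u v) := by
        rw [Int.units_mul_self, Int.units_mul_self, one_mul, one_mul]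
    _ = (Γ.walkSign p * Γ.walkSign q) *
          (Γ.walkSign p * (Γ.sign u v * Γ.walkSign q)) := by
        simp only [mul_assoc, mul_comm, mul_left_comm]
    _ = Γ.walkSign p * Γ.walkSign q := by rw [h1, mul_one]

/-- A potential function for a signed graph: pick, for each vertex, a walk from the
representative of its connected component, and take its sign. -/
noncomputable def pot (v : V) : ℤˣ :=
  Γ.walkSign (Classical.choice
    (SimpleGraph.ConnectedComponent.exact (Quot.out_eq (Γ.G.connectedComponentMk v)) :
      Γ.G.Reachable (Γ.G.connectedComponentMk v).out v))

lemma pot_spec (hbal : Γ.Balanced) {u v : V} (h : Γ.G.Adj u v) :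
    Γ.sign u v = Γ.pot u * Γ.pot v := by
  have hcc : Γ.G.connectedComponentMk u = Γ.G.connectedComponentMk v :=
    SimpleGraph.ConnectedComponent.connectedComponentMk_eq_of_adj h
  have hout : (Γ.G.connectedComponentMk v).out = (Γ.G.connectedComponentMk u).out := by
    rw [hcc]
  unfold pot
  set p := (Classical.choice
    (SimpleGraph.ConnectedComponent.exact (Quot.out_eq (Γ.G.connectedComponentMk u)) :
      Γ.G.Reachable (Γ.G.connectedComponentMk u).out u))
  set q := (Classical.choice
    (SimpleGraph.ConnectedComponent.exact (Quot.out_eq (Γ.G.connectedComponentMk v)) :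
      Γ.G.Reachable (Γ.G.connectedComponentMk v).out v))
  have := Γ.sign_eq_of_walks hbal p (q.copy hout rfl) h
  rwa [walkSign_copy] at this


end WalkLemmas

end SignedGraph

/-! ### An abstract multiplicity-containment lemma -/

open Polynomial in
theorem SignedGraph.mult_le_of_intertwine {α β : Type*} [Fintype α] [Fintype β] [DecidableEq α]
    [DecidableEq β] (M : Matrix β β ℝ) (N : Matrix α α ℝ) (B : Matrix β α ℝ)
    (hinj : Function.Injective B.mulVec) (hcomm : M * B = B * N) (lam : ℝ) :
    Polynomial.rootMultiplicity lam N.charpoly ≤ Polynomial.rootMultiplicity lam M.charpoly := by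
  classical
  set g : (α → ℝ) →ₗ[ℝ] (β → ℝ) := Matrix.toLin' B with hg
  have hginj : Function.Injective g := by
    intro x y hxy
    exact hinj (by simpa [hg, Matrix.toLin'_apply] using hxy)
  set f : (β → ℝ) →ₗ[ℝ] (β → ℝ) := Matrix.toLin' M with hf
  have hfg : ∀ x, f (g x) = g (Matrix.toLin' N x) := by
    intro x
    have := congrArg Matrix.toLin' hcomm
    rw [Matrix.toLin'_mul, Matrix.toLin'_mul] at this
    exact congrFun (congrArg (fun (l : (α → ℝ) →ₗ[ℝ] (β → ℝ)) => l.toFun) this) x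
  set W : Submodule ℝ (β → ℝ) := LinearMap.range g with hW
  obtain ⟨W', hW'⟩ := W.exists_isCompl
  set ι' := Module.Free.ChooseBasisIndex ℝ W' with hι'
  set bW : Module.Basis α ℝ W := (Pi.basisFun ℝ α).map (LinearEquiv.ofInjective g hginj) with hbW
  set bW' : Module.Basis ι' ℝ W' := Module.Free.chooseBasis ℝ W' with hbW'
  set b : Module.Basis (α ⊕ ι') ℝ (β → ℝ) :=
    (bW.prod bW').map (Submodule.prodEquivOfIsCompl W W' hW') with hb
  have hbinl : ∀ j : α, b (Sum.inl j) = g (Pi.single j 1) := by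
    intro j
    rw [hb, Module.Basis.map_apply, Submodule.coe_prodEquivOfIsCompl']
    have h1 : (bW.prod bW' (Sum.inl j)).1 = bW j := Module.Basis.prod_apply_inl_fst _ _ _
    have h2 : (bW.prod bW' (Sum.inl j)).2 = 0 := Module.Basis.prod_apply_inl_snd _ _ _
    rw [h1, h2, hbW]
    rw [Module.Basis.map_apply]
    simp only [ZeroMemClass.coe_zero, add_zero, Pi.basisFun_apply]
    exact LinearEquiv.ofInjective_apply (f := g) _
  have key : ∀ j : α, f (b (Sum.inl j)) = ∑ i : α, N i j • b (Sum.inl i) := by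
    intro j
    rw [hbinl j, hfg]
    have h1 : Matrix.toLin' N (Pi.single j 1) = ∑ i : α, N i j • (Pi.single i 1 : α → ℝ) := by
      ext l
      simp [Matrix.toLin'_apply, Matrix.mulVec, dotProduct, Pi.single_apply,
        Finset.sum_apply]
    rw [h1, map_sum]
    refine Finset.sum_congr rfl fun i _ => ?_
    rw [map_smul, hbinl i]
  set M' : Matrix (α ⊕ ι') (α ⊕ ι') ℝ := LinearMap.toMatrix b b f with hM'
  have hrepr : ∀ (j : α) (idx : α ⊕ ι'),
      M' idx (Sum.inl j) = ∑ i : α, N i j * (if Sum.inl i = idx then 1 else 0) := by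
    intro j idx
    rw [hM', LinearMap.toMatrix_apply, key]
    rw [map_sum]
    simp only [map_smul]
    rw [Finsupp.finset_sum_apply]
    refine Finset.sum_congr rfl fun i _ => ?_
    rw [Module.Basis.repr_self]
    simp [Finsupp.single_apply]
  have hblock21 : M'.toBlocks₂₁ = 0 := by
    ext i' j
    simp only [Matrix.toBlocks₂₁, Matrix.of_apply, Matrix.zero_apply]
    rw [hrepr j (Sum.inr i')]
    simp
  have hblock11 : M'.toBlocks₁₁ = N := by
    ext i j
    simp only [Matrix.toBlocks₁₁, Matrix.of_apply]
    rw [hrepr j (Sum.inl i)]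
    simp [Sum.inl.injEq]
  have hdecomp : M' = Matrix.fromBlocks N M'.toBlocks₁₂ 0 M'.toBlocks₂₂ := by
    conv_lhs => rw [← Matrix.fromBlocks_toBlocks M']
    rw [hblock21, hblock11]
  have hcp : M.charpoly = N.charpoly * M'.toBlocks₂₂.charpoly := by
    have h1 : M.charpoly = f.charpoly := by
      have := LinearMap.charpoly_toMatrix f (Pi.basisFun ℝ β)
      rw [LinearMap.toMatrix_eq_toMatrix'] at this
      rw [hf, ← this, LinearMap.toMatrix'_toLin']
    have h2 : f.charpoly = M'.charpoly := (LinearMap.charpoly_toMatrix f b).symm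
    rw [h1, h2]
    conv_lhs => rw [hdecomp]
    rw [Matrix.charpoly_fromBlocks_zero₂₁]
  rw [hcp]
  have hne : N.charpoly * M'.toBlocks₂₂.charpoly ≠ 0 :=
    mul_ne_zero (N.charpoly_monic).ne_zero (Matrix.charpoly_monic _).ne_zero
  calc rootMultiplicity lam N.charpoly
      ≤ rootMultiplicity lam N.charpoly + rootMultiplicity lam M'.toBlocks₂₂.charpoly :=
        Nat.le_add_right _ _
    _ ≤ rootMultiplicity lam (N.charpoly * M'.toBlocks₂₂.charpoly) :=
        Polynomial.le_rootMultiplicity_mul lam hne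


/-! ### Token graph combinatorics -/

namespace SignedGraph

section Token

variable {V : Type*} [Fintype V] [DecidableEq V]

/-- The set of token moves available from a vertex subset `A`. -/
noncomputable def moveSet (G : SimpleGraph V) (A : Finset V) : Finset (V × V) :=
  (A ×ˢ Aᶜ).filter fun ab => G.Adj ab.1 ab.2

lemma mem_moveSet {G : SimpleGraph V} {A : Finset V} {ab : V × V} :
    ab ∈ moveSet G A ↔ ab.1 ∈ A ∧ ab.2 ∉ A ∧ G.Adj ab.1 ab.2 := by
  simp only [moveSet, Finset.mem_filter, Finset.mem_product, Finset.mem_compl]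
  tauto

lemma card_move {A : Finset V} {a b : V} (ha : a ∈ A) (hb : b ∉ A) :
    (insert b (A.erase a)).card = A.card := by
  rw [Finset.card_insert_of_notMem (fun hb' => hb (Finset.mem_of_mem_erase hb')),
    Finset.card_erase_of_mem ha]
  have : 0 < A.card := Finset.card_pos.mpr ⟨a, ha⟩
  omega

lemma sdiff_move_left {A : Finset V} {a b : V} (ha : a ∈ A) (hb : b ∉ A) (hne : a ≠ b) :
    A \ insert b (A.erase a) = {a} := by
  ext x
  simp only [Finset.mem_sdiff, Finset.mem_insert, Finset.mem_erase, Finset.mem_singleton]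
  constructor
  · rintro ⟨hxA, hx⟩
    push_neg at hx
    by_contra hxa
    exact (hx.2 hxa) hxA
  · rintro rfl
    refine ⟨ha, ?_⟩
    push_neg
    exact ⟨hne, fun h => absurd rfl h⟩

lemma sdiff_move_right {A : Finset V} {a b : V} (ha : a ∈ A) (hb : b ∉ A) :
    insert b (A.erase a) \ A = {b} := by
  ext x
  simp only [Finset.mem_sdiff, Finset.mem_insert, Finset.mem_erase, Finset.mem_singleton]
  constructor
  · rintro ⟨hx, hxA⟩
    rcases hx with rfl | ⟨_, hxA'⟩
    · rfl
    · exact absurd hxA' hxA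
  · rintro rfl
    exact ⟨Or.inl rfl, hb⟩

variable {k : ℕ}

lemma adj_move {G : SimpleGraph V} {A B : {A : Finset V // A.card = k}} {a b : V}
    (ha : a ∈ A.1) (hb : b ∉ A.1) (hadj : G.Adj a b)
    (hB : B.1 = insert b (A.1.erase a)) : (tokenAdj G k).Adj A B := by
  refine ⟨a, b, ha, ?_, hadj, ?_⟩
  · rw [hB]; exact Finset.mem_insert_self _ _
  · rw [hB, symmDiff_def, Finset.sup_eq_union, sdiff_move_left ha hb hadj.ne,
      sdiff_move_right ha hb, ← Finset.insert_eq]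

lemma adj_elim {G : SimpleGraph V} {A B : {A : Finset V // A.card = k}}
    (h : (tokenAdj G k).Adj A B) :
    ∃ a b, a ∈ A.1 ∧ b ∉ A.1 ∧ G.Adj a b ∧ A.1 \ B.1 = {a} ∧ B.1 \ A.1 = {b} ∧
      B.1 = insert b (A.1.erase a) := by
  obtain ⟨a, b, ha, hb, hadj, hsd⟩ := h
  have hmem : ∀ x : V, x ∈ ({a, b} : Finset V) ↔
      (x ∈ A.1 ∧ x ∉ B.1) ∨ (x ∈ B.1 ∧ x ∉ A.1) := by
    intro x
    rw [← hsd, symmDiff_def, Finset.sup_eq_union, Finset.mem_union, Finset.mem_sdiff,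
      Finset.mem_sdiff]
  have hbA : b ∉ A.1 := by
    rcases (hmem b).mp (by simp) with ⟨_, hbB⟩ | ⟨_, hbA⟩
    · exact absurd hb hbB
    · exact hbA
  have haB : a ∉ B.1 := by
    rcases (hmem a).mp (by simp) with ⟨_, haB⟩ | ⟨_, haA⟩
    · exact haB
    · exact absurd ha haA
  have hAB : A.1 \ B.1 = {a} := by
    ext x
    simp only [Finset.mem_sdiff, Finset.mem_singleton]
    constructor
    · intro hx
      have : x ∈ ({a, b} : Finset V) := (hmem x).mpr (Or.inl hx)
      rcases Finset.mem_insert.mp this with rfl | hxb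
      · rfl
      · rw [Finset.mem_singleton] at hxb
        subst hxb
        exact absurd hx.1 hbA
    · rintro rfl
      exact ⟨ha, haB⟩
  have hBA : B.1 \ A.1 = {b} := by
    ext x
    simp only [Finset.mem_sdiff, Finset.mem_singleton]
    constructor
    · intro hx
      have : x ∈ ({a, b} : Finset V) := (hmem x).mpr (Or.inr hx)
      rcases Finset.mem_insert.mp this with rfl | hxb
      · exact absurd hx.1 haB
      · exact Finset.mem_singleton.mp hxb
    · rintro rfl
      exact ⟨hb, hbA⟩
  refine ⟨a, b, ha, hbA, hadj, hAB, hBA, ?_⟩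
  have h1 : B.1 = B.1 \ A.1 ∪ B.1 ∩ A.1 := (Finset.sdiff_union_inter _ _).symm
  rw [h1, hBA, Finset.inter_comm, ← Finset.sdiff_sdiff_self_left, hAB, ← Finset.erase_eq,
    ← Finset.insert_eq]

/-- Move a token from `ab.1` to `ab.2` (junk value if the result has the wrong size). -/
noncomputable def moveSub (A : {A : Finset V // A.card = k}) (ab : V × V) :
    {A : Finset V // A.card = k} :=
  if h : (insert ab.2 (A.1.erase ab.1)).card = k then ⟨_, h⟩ else A

lemma moveSub_val {A : {A : Finset V // A.card = k}} {ab : V × V}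
    (ha : ab.1 ∈ A.1) (hb : ab.2 ∉ A.1) :
    (moveSub A ab).1 = insert ab.2 (A.1.erase ab.1) := by
  rw [moveSub, dif_pos ((card_move ha hb).trans A.2)]

lemma sum_adj {G : SimpleGraph V} (A : {A : Finset V // A.card = k})
    (f : {A : Finset V // A.card = k} → ℝ) :
    ∑ B : {A : Finset V // A.card = k}, (if (tokenAdj G k).Adj A B then f B else 0)
      = ∑ ab ∈ moveSet G A.1, f (moveSub A ab) := by
  rw [← Finset.sum_filter]
  refine (Finset.sum_bij (fun ab _ => moveSub A ab) ?_ ?_ ?_ ?_).symm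
  · intro ab hab
    rw [mem_moveSet] at hab
    rw [Finset.mem_filter]
    exact ⟨Finset.mem_univ _, adj_move hab.1 hab.2.1 hab.2.2 (moveSub_val hab.1 hab.2.1)⟩
  · intro a₁ h₁ a₂ h₂ heq
    rw [mem_moveSet] at h₁ h₂
    have hv₁ : A.1 \ (moveSub A a₁).1 = {a₁.1} := by
      rw [moveSub_val h₁.1 h₁.2.1]
      exact sdiff_move_left h₁.1 h₁.2.1 h₁.2.2.ne
    have hv₂ : A.1 \ (moveSub A a₂).1 = {a₂.1} := by
      rw [moveSub_val h₂.1 h₂.2.1]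
      exact sdiff_move_left h₂.1 h₂.2.1 h₂.2.2.ne
    have hw₁ : (moveSub A a₁).1 \ A.1 = {a₁.2} := by
      rw [moveSub_val h₁.1 h₁.2.1]
      exact sdiff_move_right h₁.1 h₁.2.1
    have hw₂ : (moveSub A a₂).1 \ A.1 = {a₂.2} := by
      rw [moveSub_val h₂.1 h₂.2.1]
      exact sdiff_move_right h₂.1 h₂.2.1
    have heq' : moveSub A a₁ = moveSub A a₂ := heq
    rw [heq'] at hv₁ hw₁
    have e1 : a₁.1 = a₂.1 :=
      Finset.singleton_injective (hv₁.symm.trans hv₂)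
    have e2 : a₁.2 = a₂.2 :=
      Finset.singleton_injective (hw₁.symm.trans hw₂)
    exact Prod.ext e1 e2
  · intro B hB
    rw [Finset.mem_filter] at hB
    obtain ⟨a, b, ha, hb, hadj, _, _, hBeq⟩ := adj_elim hB.2
    refine ⟨(a, b), mem_moveSet.mpr ⟨ha, hb, hadj⟩, ?_⟩
    apply Subtype.ext
    rw [moveSub_val ha hb, hBeq]
  · intro ab hab
    rfl

lemma degree_token {G : SimpleGraph V} (A : {A : Finset V // A.card = k}) :
    ((tokenAdj G k).degree A : ℝ) = ((moveSet G A.1).card : ℝ) := by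
  classical
  have h := sum_adj (G := G) A (fun _ => (1 : ℝ))
  rw [Finset.sum_const, nsmul_eq_mul, mul_one] at h
  rw [← h]
  rw [show ∑ B : {A : Finset V // A.card = k}, (if (tokenAdj G k).Adj A B then (1:ℝ) else 0)
      = ((Finset.univ.filter fun B => (tokenAdj G k).Adj A B).card : ℝ) from Finset.sum_boole _ _]
  congr 1
  rw [← SimpleGraph.neighborFinset_eq_filter]
  rfl


/-- The sign-twisted binomial matrix associated with a potential `s`. -/
noncomputable def potMatrix (s : V → ℤˣ) (k : ℕ) :
    Matrix {A : Finset V // A.card = k} V ℝ :=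
  Matrix.of fun A v =>
    if v ∈ A.1 then (∏ a ∈ A.1, ((s a : ℤ) : ℝ)) * ((s v : ℤ) : ℝ) else 0

lemma count_claim (G : SimpleGraph V) (A : Finset V) (v : V) :
    (if v ∈ A then ((moveSet G A).card : ℝ) else 0)
      - ∑ ab ∈ moveSet G A, (if v ∈ insert ab.2 (A.erase ab.1) then (1:ℝ) else 0)
    = (if v ∈ A then (G.degree v : ℝ) else 0)
      - ∑ u ∈ A, (if G.Adj u v then (1:ℝ) else 0) := by
  classical
  have hdeg : ((G.degree v : ℕ) : ℝ) = ∑ b : V, (if G.Adj v b then (1:ℝ) else 0) := by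
    rw [Finset.sum_boole]
    norm_cast
    rw [← SimpleGraph.neighborFinset_eq_filter]
    rfl
  by_cases hv : v ∈ A
  · rw [if_pos hv, if_pos hv]
    have h1 : ∀ ab ∈ moveSet G A, (if v ∈ insert ab.2 (A.erase ab.1) then (1:ℝ) else 0)
        = 1 - (if ab.1 = v then (1:ℝ) else 0) := by
      intro ab hab
      rw [mem_moveSet] at hab
      by_cases h1 : ab.1 = v
      · rw [if_pos h1, if_neg, sub_self]
        intro hmem
        rcases Finset.mem_insert.mp hmem with h2 | h2
        · exact hab.2.1 (h2 ▸ hv)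
        · exact (Finset.mem_erase.mp h2).1 h1.symm
      · rw [if_neg h1, if_pos, sub_zero]
        exact Finset.mem_insert.mpr (Or.inr (Finset.mem_erase.mpr ⟨fun h => h1 h.symm, hv⟩))
    rw [Finset.sum_congr rfl h1, Finset.sum_sub_distrib, Finset.sum_const, nsmul_eq_mul,
      mul_one]
    have hT : ∑ ab ∈ moveSet G A, (if ab.1 = v then (1:ℝ) else 0)
        = ∑ b ∈ Aᶜ, (if G.Adj v b then (1:ℝ) else 0) := by
      rw [moveSet, Finset.sum_filter, Finset.sum_product]
      have hinner : ∀ a ∈ A,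
          (∑ b ∈ Aᶜ, if G.Adj a b then (if a = v then (1:ℝ) else 0) else 0)
          = if a = v then ∑ b ∈ Aᶜ, (if G.Adj v b then (1:ℝ) else 0) else 0 := by
        intro a _
        by_cases hav : a = v
        · subst hav; simp
        · simp [hav]
      rw [Finset.sum_congr rfl hinner, Finset.sum_ite_eq' A v, if_pos hv]
    rw [hT, hdeg]
    have hsplit : ∑ b : V, (if G.Adj v b then (1:ℝ) else 0)
        = ∑ b ∈ A, (if G.Adj v b then (1:ℝ) else 0)
          + ∑ b ∈ Aᶜ, (if G.Adj v b then (1:ℝ) else 0) :=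
      (Finset.sum_add_sum_compl A _).symm
    rw [hsplit]
    have hcomm : ∑ u ∈ A, (if G.Adj u v then (1:ℝ) else 0)
        = ∑ b ∈ A, (if G.Adj v b then (1:ℝ) else 0) := by
      refine Finset.sum_congr rfl fun u _ => ?_
      rw [G.adj_comm]
    rw [hcomm]
    ring
  · rw [if_neg hv, if_neg hv]
    have h1 : ∀ ab ∈ moveSet G A, (if v ∈ insert ab.2 (A.erase ab.1) then (1:ℝ) else 0)
        = (if ab.2 = v then (1:ℝ) else 0) := by
      intro ab hab
      rw [mem_moveSet] at hab
      by_cases h2 : ab.2 = v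
      · rw [if_pos h2, if_pos]
        exact Finset.mem_insert.mpr (Or.inl h2.symm)
      · rw [if_neg h2, if_neg]
        intro hmem
        rcases Finset.mem_insert.mp hmem with h3 | h3
        · exact h2 h3.symm
        · exact hv (Finset.mem_of_mem_erase h3)
    rw [Finset.sum_congr rfl h1]
    have hT : ∑ ab ∈ moveSet G A, (if ab.2 = v then (1:ℝ) else 0)
        = ∑ u ∈ A, (if G.Adj u v then (1:ℝ) else 0) := by
      rw [moveSet, Finset.sum_filter, Finset.sum_product]
      refine Finset.sum_congr rfl fun a ha => ?_
      have hbv : ∀ b ∈ Aᶜ, (if G.Adj a b then (if b = v then (1:ℝ) else 0) else 0)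
          = if b = v then (if G.Adj a v then (1:ℝ) else 0) else 0 := by
        intro b _
        by_cases hb : b = v
        · subst hb; simp
        · simp [hb]
      rw [Finset.sum_congr rfl hbv, Finset.sum_ite_eq' Aᶜ v, if_pos (Finset.mem_compl.mpr hv)]
    rw [hT]

lemma lap_comm (Γ : SignedGraph V) (s : V → ℤˣ)
    (hs : ∀ u v, Γ.G.Adj u v → Γ.sign u v = s u * s v) (k : ℕ) :
    (Γ.token k).lapMatrix * potMatrix s k = potMatrix s k * Γ.lapMatrix := by
  classical
  have hsr : ∀ v : V, ((s v : ℤ) : ℝ) * ((s v : ℤ) : ℝ) = 1 := by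
    intro v
    rw [← Int.cast_mul, ← Units.val_mul, Int.units_mul_self, Units.val_one, Int.cast_one]
  ext A v
  rw [Matrix.mul_apply, Matrix.mul_apply]
  set P : ℝ := ∏ a ∈ A.1, ((s a : ℤ) : ℝ) with hP
  have hL : ∑ B : {A : Finset V // A.card = k},
      (Γ.token k).lapMatrix A B * potMatrix s k B v
      = P * ((s v : ℤ) : ℝ) *
        ((if v ∈ A.1 then ((moveSet Γ.G A.1).card : ℝ) else 0)
          - ∑ ab ∈ moveSet Γ.G A.1,
              (if v ∈ insert ab.2 (A.1.erase ab.1) then (1:ℝ) else 0)) := by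
    have hsplit : ∀ B : {A : Finset V // A.card = k},
        (Γ.token k).lapMatrix A B * potMatrix s k B v
        = (if A = B then (((tokenAdj Γ.G k).degree A : ℕ) : ℝ) else 0) * potMatrix s k B v
          - (if (tokenAdj Γ.G k).Adj A B
              then ((((Γ.token k).sign A B : ℤˣ) : ℤ) : ℝ) * potMatrix s k B v else 0) := by
      intro B
      rw [lapMatrix, Matrix.sub_apply, Matrix.diagonal_apply, sub_mul]
      congr 1
      rw [adjMatrix, Matrix.of_apply, ite_mul, zero_mul]
      rfl
    rw [Finset.sum_congr rfl (fun B _ => hsplit B), Finset.sum_sub_distrib]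
    have h1 : ∑ B : {A : Finset V // A.card = k},
        (if A = B then (((tokenAdj Γ.G k).degree A : ℕ) : ℝ) else 0) * potMatrix s k B v
        = P * ((s v : ℤ) : ℝ) * (if v ∈ A.1 then ((moveSet Γ.G A.1).card : ℝ) else 0) := by
      rw [Finset.sum_eq_single_of_mem A (Finset.mem_univ A)
        (fun B _ hBA => by rw [if_neg (fun h => hBA h.symm), zero_mul])]
      rw [if_pos rfl, degree_token, potMatrix, Matrix.of_apply]
      by_cases hv : v ∈ A.1
      · rw [if_pos hv, if_pos hv]; ring
      · rw [if_neg hv, if_neg hv]; ring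
    have h2 : ∑ B : {A : Finset V // A.card = k},
        (if (tokenAdj Γ.G k).Adj A B
          then ((((Γ.token k).sign A B : ℤˣ) : ℤ) : ℝ) * potMatrix s k B v else 0)
        = P * ((s v : ℤ) : ℝ) * ∑ ab ∈ moveSet Γ.G A.1,
            (if v ∈ insert ab.2 (A.1.erase ab.1) then (1:ℝ) else 0) := by
      rw [sum_adj A (fun B => ((((Γ.token k).sign A B : ℤˣ) : ℤ) : ℝ) * potMatrix s k B v)]
      have hterm : ∀ ab ∈ moveSet Γ.G A.1,
          ((((Γ.token k).sign A (moveSub A ab) : ℤˣ) : ℤ) : ℝ) *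
              potMatrix s k (moveSub A ab) v
          = P * ((s v : ℤ) : ℝ) *
              (if v ∈ insert ab.2 (A.1.erase ab.1) then (1:ℝ) else 0) := by
        intro ab hab
        rw [mem_moveSet] at hab
        obtain ⟨ha, hb, hadj⟩ := hab
        have hval := moveSub_val (A := A) ha hb
        have hsign : (Γ.token k).sign A (moveSub A ab) = s ab.1 * s ab.2 := by
          show (∏ x ∈ A.1 \ (moveSub A ab).1, ∏ y ∈ (moveSub A ab).1 \ A.1, Γ.sign x y) = _
          rw [hval, sdiff_move_left ha hb hadj.ne, sdiff_move_right ha hb,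
            Finset.prod_singleton, Finset.prod_singleton]
          exact hs _ _ hadj
        rw [hsign, potMatrix, Matrix.of_apply, hval]
        by_cases hv : v ∈ insert ab.2 (A.1.erase ab.1)
        · rw [if_pos hv, if_pos hv, mul_one]
          have hprod : ∏ a ∈ insert ab.2 (A.1.erase ab.1), ((s a : ℤ) : ℝ)
              = ((s ab.2 : ℤ) : ℝ) * (((s ab.1 : ℤ) : ℝ) * P) := by
            rw [Finset.prod_insert (fun h => hb (Finset.mem_of_mem_erase h))]
            congr 1
            have h2 := Finset.mul_prod_erase A.1 (fun a => ((s a : ℤ) : ℝ)) ha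
            rw [hP, ← h2, ← mul_assoc, hsr, one_mul]
          rw [hprod, Units.val_mul, Int.cast_mul]
          calc ((s ab.1 : ℤ) : ℝ) * ((s ab.2 : ℤ) : ℝ) *
                (((s ab.2 : ℤ) : ℝ) * (((s ab.1 : ℤ) : ℝ) * P) * ((s v : ℤ) : ℝ))
              = (((s ab.1 : ℤ) : ℝ) * ((s ab.1 : ℤ) : ℝ)) *
                  ((((s ab.2 : ℤ) : ℝ) * ((s ab.2 : ℤ) : ℝ))) * (P * ((s v : ℤ) : ℝ)) := by
                ring
            _ = P * ((s v : ℤ) : ℝ) := by rw [hsr, hsr, one_mul, one_mul]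
        · rw [if_neg hv, if_neg hv, mul_zero, mul_zero]
      rw [Finset.sum_congr rfl hterm, ← Finset.mul_sum]
    rw [h1, h2, ← mul_sub]
  have hR : ∑ u : V, potMatrix s k A u * Γ.lapMatrix u v
      = P * ((s v : ℤ) : ℝ) *
        ((if v ∈ A.1 then (Γ.G.degree v : ℝ) else 0)
          - ∑ u ∈ A.1, (if Γ.G.Adj u v then (1:ℝ) else 0)) := by
    have hsplit : ∀ u : V, potMatrix s k A u * Γ.lapMatrix u v
        = (if u ∈ A.1 then P * ((s u : ℤ) : ℝ) else 0) *
            (if u = v then (Γ.G.degree u : ℝ) else 0)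
          - (if u ∈ A.1 then P * ((s u : ℤ) : ℝ) else 0) *
            (if Γ.G.Adj u v then (((Γ.sign u v : ℤˣ) : ℤ) : ℝ) else 0) := by
      intro u
      rw [lapMatrix, Matrix.sub_apply, Matrix.diagonal_apply, mul_sub]
      rfl
    rw [Finset.sum_congr rfl (fun u _ => hsplit u), Finset.sum_sub_distrib]
    have h1 : ∑ u : V, (if u ∈ A.1 then P * ((s u : ℤ) : ℝ) else 0) *
          (if u = v then (Γ.G.degree u : ℝ) else 0)
        = if v ∈ A.1 then P * ((s v : ℤ) : ℝ) * (Γ.G.degree v : ℝ) else 0 := by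
      have hstep : ∀ u : V, (if u ∈ A.1 then P * ((s u : ℤ) : ℝ) else 0) *
            (if u = v then (Γ.G.degree u : ℝ) else 0)
          = if u = v then (if u ∈ A.1 then P * ((s u : ℤ) : ℝ) * (Γ.G.degree u : ℝ) else 0)
            else 0 := by
        intro u
        by_cases huv : u = v
        · subst huv
          by_cases h2 : u ∈ A.1 <;> simp [h2, mul_assoc]
        · simp [huv]
      rw [Finset.sum_congr rfl (fun u _ => hstep u),
        Finset.sum_ite_eq' Finset.univ v _, if_pos (Finset.mem_univ v)]
    have h2 : ∑ u : V, (if u ∈ A.1 then P * ((s u : ℤ) : ℝ) else 0) *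
          (if Γ.G.Adj u v then (((Γ.sign u v : ℤˣ) : ℤ) : ℝ) else 0)
        = P * ((s v : ℤ) : ℝ) * ∑ u ∈ A.1, (if Γ.G.Adj u v then (1:ℝ) else 0) := by
      have hstep : ∀ u : V, (if u ∈ A.1 then P * ((s u : ℤ) : ℝ) else 0) *
            (if Γ.G.Adj u v then (((Γ.sign u v : ℤˣ) : ℤ) : ℝ) else 0)
          = if u ∈ A.1 then
              P * ((s v : ℤ) : ℝ) * (if Γ.G.Adj u v then (1:ℝ) else 0) else 0 := by
        intro u
        by_cases hu : u ∈ A.1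
        · rw [if_pos hu, if_pos hu]
          by_cases hadj : Γ.G.Adj u v
          · rw [if_pos hadj, if_pos hadj, hs u v hadj, Units.val_mul, Int.cast_mul, mul_one]
            calc P * ((s u : ℤ) : ℝ) * (((s u : ℤ) : ℝ) * ((s v : ℤ) : ℝ))
                = (((s u : ℤ) : ℝ) * ((s u : ℤ) : ℝ)) * (P * ((s v : ℤ) : ℝ)) := by ring
              _ = P * ((s v : ℤ) : ℝ) := by rw [hsr, one_mul]
          · rw [if_neg hadj, if_neg hadj, mul_zero, mul_zero]
        · rw [if_neg hu, if_neg hu, zero_mul]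
      rw [Finset.sum_congr rfl (fun u _ => hstep u), Fintype.sum_ite_mem, ← Finset.mul_sum]
    rw [h1, h2]
    by_cases hv : v ∈ A.1
    · rw [if_pos hv, if_pos hv]; ring
    · rw [if_neg hv, if_neg hv]; ring
  rw [hL, hR, count_claim]

lemma potMatrix_injective (s : V → ℤˣ) {k : ℕ} (hk1 : 1 ≤ k)
    (hk2 : k ≤ Fintype.card V - 1) :
    Function.Injective (potMatrix (V := V) s k).mulVec := by
  classical
  have hcard : k ≤ Fintype.card V := le_trans hk2 (Nat.sub_le _ _)
  have hsr : ∀ v : V, ((s v : ℤ) : ℝ) ≠ 0 := fun v => by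
    simp [Int.cast_ne_zero]
  intro x y hxy
  have hz : (potMatrix (V := V) s k).mulVec (x - y) = 0 := by
    rw [Matrix.mulVec_sub, hxy, sub_self]
  set z : V → ℝ := x - y with hzdef
  suffices hz0 : z = 0 by
    exact sub_eq_zero.mp hz0
  have hA : ∀ A : {A : Finset V // A.card = k},
      ∑ v ∈ A.1, ((s v : ℤ) : ℝ) * z v = 0 := by
    intro A
    have h0 := congrFun hz A
    rw [Matrix.mulVec, Pi.zero_apply] at h0
    have h0' : ∑ v : V,
        (if v ∈ A.1 then (∏ a ∈ A.1, ((s a : ℤ) : ℝ)) * ((s v : ℤ) : ℝ) else 0) * z v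
        = 0 := h0
    have hstep : ∀ v : V,
        (if v ∈ A.1 then (∏ a ∈ A.1, ((s a : ℤ) : ℝ)) * ((s v : ℤ) : ℝ) else 0) * z v
        = if v ∈ A.1 then (∏ a ∈ A.1, ((s a : ℤ) : ℝ)) * (((s v : ℤ) : ℝ) * z v) else 0 := by
      intro v
      by_cases hv : v ∈ A.1
      · rw [if_pos hv, if_pos hv]; ring
      · rw [if_neg hv, if_neg hv, zero_mul]
    rw [Finset.sum_congr rfl (fun v _ => hstep v), Fintype.sum_ite_mem, ← Finset.mul_sum]
      at h0'
    have hPne : (∏ a ∈ A.1, ((s a : ℤ) : ℝ)) ≠ 0 :=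
      Finset.prod_ne_zero_iff.mpr fun a _ => hsr a
    exact (mul_eq_zero.mp h0').resolve_left hPne
  set w : V → ℝ := fun v => ((s v : ℤ) : ℝ) * z v with hwdef
  have hw : ∀ A : Finset V, A.card = k → ∑ v ∈ A, w v = 0 := fun A hA' => hA ⟨A, hA'⟩
  have hconst : ∀ u u' : V, w u = w u' := by
    intro u u'
    by_cases huw : u = u'
    · rw [huw]
    · have huniv : ({u} : Finset V) ⊆ Finset.univ.erase u' := by
        intro x hx
        rw [Finset.mem_singleton] at hx
        subst hx
        exact Finset.mem_erase.mpr ⟨huw, Finset.mem_univ _⟩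
      obtain ⟨A, hsub, hsub2, hcardA⟩ := Finset.exists_subsuperset_card_eq huniv
        (by simpa using hk1)
        (by rw [Finset.card_erase_of_mem (Finset.mem_univ _), Finset.card_univ]; exact hk2)
      have huA : u ∈ A := hsub (Finset.mem_singleton_self u)
      have hwA : u' ∉ A := fun hwA => (Finset.mem_erase.mp (hsub2 hwA)).1 rfl
      have h1 := hw A hcardA
      have h2 := hw (insert u' (A.erase u)) ((card_move huA hwA).trans hcardA)
      rw [← Finset.add_sum_erase A w huA] at h1
      rw [Finset.sum_insert (fun h => hwA (Finset.mem_of_mem_erase h))] at h2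
      linarith
  obtain ⟨A₀, _, hcardA₀⟩ := Finset.exists_subset_card_eq (s := (Finset.univ : Finset V)) (n := k)
    (by rw [Finset.card_univ]; exact hcard)
  have hne : A₀.Nonempty := Finset.card_pos.mp (by rw [hcardA₀]; omega)
  obtain ⟨v₀, hv₀⟩ := hne
  have hsum0 := hw A₀ hcardA₀
  have hconstsum : ∑ v ∈ A₀, w v = (A₀.card : ℝ) * w v₀ := by
    rw [Finset.sum_congr rfl (fun v _ => hconst v v₀), Finset.sum_const, nsmul_eq_mul]
  have hw0 : w v₀ = 0 := by
    rw [hconstsum, hcardA₀] at hsum0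
    have hkne : (k : ℝ) ≠ 0 := Nat.cast_ne_zero.mpr (by omega)
    exact (mul_eq_zero.mp hsum0).resolve_left hkne
  funext v
  have hwv : w v = 0 := (hconst v v₀).trans hw0
  have := (mul_eq_zero.mp hwv).resolve_left (hsr v)
  simpa using this

end Token

end SignedGraph
/-- the Laplacian spectrum of a balanced signed graph is contained, with
multiplicities, in the Laplacian spectrum of its `k`-token signed graph. -/
theorem lap_spectrum_containment {V : Type*} [Fintype V] [DecidableEq V] (n k : ℕ)
    (hn : Fintype.card V = n) (hk1 : 1 ≤ k) (hk2 : k ≤ n - 1)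
    (Γ : SignedGraph V) (hbal : Γ.Balanced) (lam : ℝ) :
    Polynomial.rootMultiplicity lam Γ.lapMatrix.charpoly
      ≤ Polynomial.rootMultiplicity lam (Γ.token k).lapMatrix.charpoly := by
  classical
  have hs : ∀ u v, Γ.G.Adj u v → Γ.sign u v = Γ.pot u * Γ.pot v :=
    fun u v h => Γ.pot_spec hbal h
  have hcomm := SignedGraph.lap_comm Γ Γ.pot hs k
  have hinj : Function.Injective (SignedGraph.potMatrix (V := V) Γ.pot k).mulVec :=
    SignedGraph.potMatrix_injective Γ.pot hk1 (by rw [hn]; exact hk2)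
  exact SignedGraph.mult_le_of_intertwine _ _ _ hinj hcomm lam
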